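/- Nonpositivity of the Kruzhkov interface functional α for a fixed connection (Lemma A.1): Let f_l, f_r be uniformly convex C² fluxes as in the context and let (A,B) be a connection. For any two pairs (u_l,u_r), (v_l,v_r) ∈ ℝ² satisfying I^{AB}(u_l,u_r) ≤ 0, I^{AB}(v_l,v_r) ≤ 0, f_l(u_l) = f_r(u_r) and f_l(v_l) = f_r(v_r), one has α(u_l,u_r,v_l,v_r) ≤ 0. -/
import Mathlib


noncomputable section

/-- The interface entropy functional
`I^{AB}(u_l,u_r) = sgn(u_r - B)(f_r(u_r) - f_r(B)) - sgn(u_l - A)(f_l(u_l) - f_l(A))`. -/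
def IAB (fl fr : ℝ → ℝ) (A B ul ur : ℝ) : ℝ :=
  Real.sign (ur - B) * (fr ur - fr B) - Real.sign (ul - A) * (fl ul - fl A)

/-- The Kruzhkov interface functional
`α(u_l,u_r,v_l,v_r) = sgn(u_r - v_r)(f_r(u_r) - f_r(v_r)) - sgn(u_l - v_l)(f_l(u_l) - f_l(v_l))`. -/
def alphaFn (fl fr : ℝ → ℝ) (ul ur vl vr : ℝ) : ℝ :=
  Real.sign (ur - vr) * (fr ur - fr vr) - Real.sign (ul - vl) * (fl ul - fl vl)

lemma sign_bounds (x : ℝ) : -1 ≤ Real.sign x ∧ Real.sign x ≤ 1 := by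
  rcases Real.sign_apply_eq x with h | h | h <;> rw [h] <;> norm_num

/-- Uniform convexity with critical point `θ` gives monotonicity on each side of `θ`. -/
lemma convex_mono (f : ℝ → ℝ) (a : ℝ) (ha : 0 < a)
    (hf : ContDiff ℝ 2 f) (hf2 : ∀ u, a ≤ deriv (deriv f) u)
    (θ : ℝ) (hθ : deriv f θ = 0) :
    (∀ x y, θ ≤ x → x ≤ y → f x ≤ f y) ∧ (∀ x y, x ≤ y → y ≤ θ → f y ≤ f x) := by
  have hd : Differentiable ℝ f := hf.differentiable (by norm_num)
  have hD : StrictMono (deriv f) :=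
    strictMono_of_deriv_pos fun x => lt_of_lt_of_le ha (hf2 x)
  have hpos : ∀ x, θ ≤ x → 0 ≤ deriv f x := fun x hx => hθ ▸ hD.monotone hx
  have hneg : ∀ x, x ≤ θ → deriv f x ≤ 0 := fun x hx => hθ ▸ hD.monotone hx
  constructor
  · intro x y hx hxy
    have := monotoneOn_of_deriv_nonneg (convex_Ici θ) hd.continuous.continuousOn
      hd.differentiableOn (fun z hz => hpos z (le_of_lt (by simpa using hz)))
    exact this hx (le_trans hx hxy) hxy
  · intro x y hxy hy
    have := antitoneOn_of_deriv_nonpos (convex_Iic θ) hd.continuous.continuousOn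
      hd.differentiableOn (fun z hz => hneg z (le_of_lt (by simpa using hz)))
    exact this (le_trans hxy hy) hy hxy

/-- Structural properties of a pair satisfying the interface entropy inequality. -/
lemma pair_props (fl fr : ℝ → ℝ) (θl θr A B : ℝ)
    (hAB : fl A = fr B) (hA : A ≤ θl) (hB : θr ≤ B)
    (hlm : ∀ x y, θl ≤ x → x ≤ y → fl x ≤ fl y)
    (hla : ∀ x y, x ≤ y → y ≤ θl → fl y ≤ fl x)
    (hrm : ∀ x y, θr ≤ x → x ≤ y → fr x ≤ fr y)
    (wl wr : ℝ) (hI : IAB fl fr A B wl wr ≤ 0) (hRH : fl wl = fr wr) :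
    fl A ≤ fl wl ∧ (fl A < fl wl → θl < wl ∨ wr < θr) := by
  have hc1 : fl A ≤ fl wl := by
    by_contra h
    push_neg at h
    have hwlA : A < wl := by
      by_contra h2
      push_neg at h2
      exact absurd (hla wl A h2 hA) (not_le.2 h)
    have hwrB : wr < B := by
      by_contra h2
      push_neg at h2
      have hle : fr B ≤ fr wr := hrm B wr hB h2
      rw [← hAB, ← hRH] at hle
      exact absurd hle (not_le.2 h)
    have s1 : Real.sign (wl - A) = 1 := Real.sign_of_pos (by linarith)
    have s2 : Real.sign (wr - B) = -1 := Real.sign_of_neg (by linarith)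
    have hval : IAB fl fr A B wl wr = -(fr wr - fr B) - (fl wl - fl A) := by
      unfold IAB; rw [s1, s2]; ring
    rw [← hRH, ← hAB] at hval
    linarith [hI, hval]
  refine ⟨hc1, ?_⟩
  intro hlt
  by_contra h
  push_neg at h
  obtain ⟨h1, h2⟩ := h
  have hwlA : wl < A := by
    by_contra h3
    push_neg at h3
    exact absurd (hla A wl h3 h1) (not_le.2 hlt)
  have hwrB : B < wr := by
    by_contra h3
    push_neg at h3
    have hle : fr wr ≤ fr B := hrm wr B h2 h3
    rw [← hAB, ← hRH] at hle
    exact absurd hle (not_le.2 hlt)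
  have s1 : Real.sign (wl - A) = -1 := Real.sign_of_neg (by linarith)
  have s2 : Real.sign (wr - B) = 1 := Real.sign_of_pos (by linarith)
  have hval : IAB fl fr A B wl wr = (fr wr - fr B) + (fl wl - fl A) := by
    unfold IAB; rw [s1, s2]; ring
  rw [← hRH, ← hAB] at hval
  linarith [hI, hval]

/-- **Lemma A.1**: nonpositivity of the Kruzhkov interface functional `α` for a fixed
connection. -/
theorem alpha_nonpos
    (fl fr : ℝ → ℝ) (a : ℝ) (ha : 0 < a)
    (hfl : ContDiff ℝ 2 fl) (hfr : ContDiff ℝ 2 fr)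
    (hfl2 : ∀ u : ℝ, a ≤ deriv (deriv fl) u) (hfr2 : ∀ u : ℝ, a ≤ deriv (deriv fr) u)
    (θl θr : ℝ) (hθl : deriv fl θl = 0) (hθr : deriv fr θr = 0)
    (A B : ℝ) (hAB : fl A = fr B) (hA : A ≤ θl) (hB : θr ≤ B)
    (ul ur vl vr : ℝ)
    (hIu : IAB fl fr A B ul ur ≤ 0) (hIv : IAB fl fr A B vl vr ≤ 0)
    (hRHu : fl ul = fr ur) (hRHv : fl vl = fr vr) :
    alphaFn fl fr ul ur vl vr ≤ 0 := by
  obtain ⟨hlm, hla⟩ := convex_mono fl a ha hfl hfl2 θl hθl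
  obtain ⟨hrm, hra⟩ := convex_mono fr a ha hfr hfr2 θr hθr
  obtain ⟨hcu, hdu⟩ := pair_props fl fr θl θr A B hAB hA hB hlm hla hrm ul ur hIu hRHu
  obtain ⟨hcv, hdv⟩ := pair_props fl fr θl θr A B hAB hA hB hlm hla hrm vl vr hIv hRHv
  have key : alphaFn fl fr ul ur vl vr
      = (Real.sign (ur - vr) - Real.sign (ul - vl)) * (fl ul - fl vl) := by
    unfold alphaFn; rw [← hRHu, ← hRHv]; ring
  rcases lt_trichotomy (fl ul) (fl vl) with hpq | hpq | hpq
  · rcases hdv (lt_of_le_of_lt hcu hpq) with h1 | h2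
    · have hul : ul < vl := by
        by_contra h
        push_neg at h
        exact absurd (hlm vl ul h1.le h) (not_le.2 hpq)
      have s : Real.sign (ul - vl) = -1 := Real.sign_of_neg (by linarith)
      rw [key, s]
      have hb := (sign_bounds (ur - vr)).1
      nlinarith
    · have hur : vr < ur := by
        by_contra h
        push_neg at h
        have hle : fr vr ≤ fr ur := hra ur vr h h2.le
        rw [← hRHu, ← hRHv] at hle
        exact absurd hle (not_le.2 hpq)
      have s : Real.sign (ur - vr) = 1 := Real.sign_of_pos (by linarith)
      rw [key, s]
      have hb := (sign_bounds (ul - vl)).2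
      nlinarith
  · rw [key, hpq]; simp
  · rcases hdu (lt_of_le_of_lt hcv hpq) with h1 | h2
    · have hvl : vl < ul := by
        by_contra h
        push_neg at h
        exact absurd (hlm ul vl h1.le h) (not_le.2 hpq)
      have s : Real.sign (ul - vl) = 1 := Real.sign_of_pos (by linarith)
      rw [key, s]
      have hb := (sign_bounds (ur - vr)).2
      nlinarith
    · have hvr : ur < vr := by
        by_contra h
        push_neg at h
        have hle : fr ur ≤ fr vr := hra vr ur h h2.le
        rw [← hRHu, ← hRHv] at hle
        exact absurd hle (not_le.2 hpq)
      have s : Real.sign (ur - vr) = -1 := Real.sign_of_neg (by linarith)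
      rw [key, s]
      have hb := (sign_bounds (ul - vl)).1
      nlinarith
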